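/- Under the hypotheses of the asymptotic-preservation result for type I ImEx Runge–Kutta methods applied to the split semidiscrete KdVH system (A ∈ ℝ^{s×s} invertible; stage equations Uᵢ(τ) = uⁿ + Δt·Σⱼ ãᵢⱼ f(Uⱼ(τ)) − Δt·Σⱼ aᵢⱼ D₊Wⱼ(τ), Vᵢ(τ) = vⁿ + (Δt/τ)·Σⱼ aᵢⱼ (DVⱼ(τ) − Wⱼ(τ)), Wᵢ(τ) = wⁿ + (Δt/τ)·Σⱼ aᵢⱼ (Vⱼ(τ) − D₋Uⱼ(τ)); stage limits Uᵢ(τ) → Uᵢ⁰, Vᵢ(τ) → Vᵢ⁰, Wᵢ(τ) → Wᵢ⁰ as τ → 0⁺), assume additionally that the method is globally stiffly accurate: ã_{sj} = b̃ⱼ and a_{sj} = bⱼ for all j = 1, …, s. Then for every τ > 0 the updates vⁿ⁺¹(τ) = vⁿ + (Δt/τ)·Σⱼ bⱼ(DVⱼ(τ) − Wⱼ(τ)) and wⁿ⁺¹(τ) = wⁿ + (Δt/τ)·Σⱼ bⱼ(Vⱼ(τ) − D₋Uⱼ(τ)) satisfy vⁿ⁺¹(τ) = V_s(τ) and wⁿ⁺¹(τ)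 = W_s(τ), and consequently, as τ → 0⁺, vⁿ⁺¹(τ) → D₋U_s⁰ and wⁿ⁺¹(τ) → D D₋ U_s⁰, where U_s⁰ equals the limit of the u-update uⁿ⁺¹(τ). Hence the method is asymptotic-preserving for the auxiliary components v and w. -/

import Mathlib

open Filter Matrix

/-- Asymptotic preservation of globally stiffly accurate type I ImEx Runge–Kutta
methods for the auxiliary components of the split semidiscrete KdVH system: under the
GSA property the auxiliary updates equal the last stages, `vⁿ⁺¹(τ) = V_s(τ)` and
`wⁿ⁺¹(τ) = W_s(τ)`, and as `τ → 0⁺` they converge to `D₋U_s⁰` and `DD₋U_s⁰`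
respectively, where `U_s⁰` is the limit of the `u`-update. -/
theorem imex_typeI_gsa_asymptotic_preserving_aux (N s : ℕ) (hs : 0 < s)
    (Δt : ℝ) (hΔt : 0 < Δt)
    (D Dp Dm : Matrix (Fin N) (Fin N) ℝ)
    (Ae A : Matrix (Fin s) (Fin s) ℝ) (be b : Fin s → ℝ)
    (hA : IsUnit A)
    (hGSA : ∀ j : Fin s, Ae ⟨s - 1, by omega⟩ j = be j ∧ A ⟨s - 1, by omega⟩ j = b j)
    (f : (Fin N → ℝ) → (Fin N → ℝ))
    (hf : ∀ u : Fin N → ℝ, f u = -(1/3 : ℝ) • (D.mulVec (u * u) + u * D.mulVec u))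
    (un vn wn : Fin N → ℝ)
    (U V W : ℝ → Fin s → Fin N → ℝ)
    (U0 V0 W0 : Fin s → Fin N → ℝ)
    (hUeq : ∀ τ : ℝ, 0 < τ → ∀ i : Fin s,
      U τ i = un + Δt • (∑ j, Ae i j • f (U τ j))
        - Δt • (∑ j, A i j • Dp.mulVec (W τ j)))
    (hVeq : ∀ τ : ℝ, 0 < τ → ∀ i : Fin s,
      V τ i = vn + (Δt / τ) • (∑ j, A i j • (D.mulVec (V τ j) - W τ j)))
    (hWeq : ∀ τ : ℝ, 0 < τ → ∀ i : Fin s,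
      W τ i = wn + (Δt / τ) • (∑ j, A i j • (V τ j - Dm.mulVec (U τ j))))
    (hUlim : ∀ i, Tendsto (fun τ => U τ i) (nhdsWithin 0 (Set.Ioi 0)) (nhds (U0 i)))
    (hVlim : ∀ i, Tendsto (fun τ => V τ i) (nhdsWithin 0 (Set.Ioi 0)) (nhds (V0 i)))
    (hWlim : ∀ i, Tendsto (fun τ => W τ i) (nhdsWithin 0 (Set.Ioi 0)) (nhds (W0 i))) :
    (∀ τ : ℝ, 0 < τ →
      vn + (Δt / τ) • (∑ j, b j • (D.mulVec (V τ j) - W τ j)) = V τ ⟨s - 1, by omega⟩ ∧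
      wn + (Δt / τ) • (∑ j, b j • (V τ j - Dm.mulVec (U τ j))) = W τ ⟨s - 1, by omega⟩) ∧
    Tendsto (fun τ => vn + (Δt / τ) • (∑ j, b j • (D.mulVec (V τ j) - W τ j)))
      (nhdsWithin 0 (Set.Ioi 0)) (nhds (Dm.mulVec (U0 ⟨s - 1, by omega⟩))) ∧
    Tendsto (fun τ => wn + (Δt / τ) • (∑ j, b j • (V τ j - Dm.mulVec (U τ j))))
      (nhdsWithin 0 (Set.Ioi 0)) (nhds (D.mulVec (Dm.mulVec (U0 ⟨s - 1, by omega⟩)))) ∧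
    Tendsto
      (fun τ => un + Δt • (∑ j, be j • f (U τ j)) - Δt • (∑ j, b j • Dp.mulVec (W τ j)))
      (nhdsWithin 0 (Set.Ioi 0)) (nhds (U0 ⟨s - 1, by omega⟩)) := by
  have hsl : (s - 1 : ℕ) < s := by omega
  set L : Fin s := ⟨s - 1, hsl⟩ with hLdef
  have hΔ : (Δt : ℝ) ≠ 0 := ne_of_gt hΔt
  -- injectivity from IsUnit A
  have hinj : ∀ x : Fin s → Fin N → ℝ,
      (∀ i : Fin s, ∑ j, A i j • x j = 0) → ∀ j, x j = 0 := by
    intro x hx j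
    funext k
    have hm : A.mulVec (fun j => x j k) = A.mulVec 0 := by
      funext i
      have := congrFun (hx i) k
      simpa [Matrix.mulVec, dotProduct, Finset.sum_apply, mul_comm] using this
    have := (Matrix.mulVec_injective_iff_isUnit.mpr hA) hm
    have := congrFun this j
    simpa using this
  -- continuity of mulVec
  have hcont : ∀ (M : Matrix (Fin N) (Fin N) ℝ), Continuous (M.mulVec) := by
    intro M
    exact (Matrix.mulVecLin M).continuous_of_finiteDimensional
  have hmem : ∀ᶠ τ in nhdsWithin (0:ℝ) (Set.Ioi 0), τ ∈ Set.Ioi (0:ℝ) :=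
    eventually_mem_nhdsWithin
  have htend0 : Tendsto (fun τ : ℝ => τ / Δt) (nhdsWithin 0 (Set.Ioi 0)) (nhds 0) := by
    have : Tendsto (fun τ : ℝ => τ / Δt) (nhds 0) (nhds (0 / Δt)) :=
      (continuous_id.div_const Δt).tendsto 0
    simpa using this.mono_left nhdsWithin_le_nhds
  -- generic lemma: stage residuals vanish in the limit
  have resid : ∀ (x : ℝ → Fin s → Fin N → ℝ) (x0 : Fin s → Fin N → ℝ)
      (y : ℝ → Fin s → Fin N → ℝ) (y0 : Fin s → Fin N → ℝ) (z : Fin N → ℝ),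
      (∀ τ : ℝ, 0 < τ → ∀ i : Fin s,
        y τ i = z + (Δt / τ) • (∑ j, A i j • x τ j)) →
      (∀ j, Tendsto (fun τ => x τ j) (nhdsWithin 0 (Set.Ioi 0)) (nhds (x0 j))) →
      (∀ i, Tendsto (fun τ => y τ i) (nhdsWithin 0 (Set.Ioi 0)) (nhds (y0 i))) →
      ∀ j, x0 j = 0 := by
    intro x x0 y y0 z heq hx hy
    apply hinj
    intro i
    have h1 : Tendsto (fun τ => ∑ j, A i j • x τ j) (nhdsWithin 0 (Set.Ioi 0))
        (nhds (∑ j, A i j • x0 j)) :=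
      tendsto_finset_sum _ (fun j _ => (hx j).const_smul _)
    have h2 : Tendsto (fun τ => ∑ j, A i j • x τ j) (nhdsWithin 0 (Set.Ioi 0))
        (nhds 0) := by
      have hEq : ∀ᶠ τ in nhdsWithin (0:ℝ) (Set.Ioi 0),
          (τ / Δt) • (y τ i - z) = ∑ j, A i j • x τ j := by
        filter_upwards [hmem] with τ hτ
        have hτ0 : (τ : ℝ) ≠ 0 := ne_of_gt hτ
        have := heq τ hτ i
        have h3 : y τ i - z = (Δt / τ) • (∑ j, A i j • x τ j) := by
          rw [this]; abel
        rw [h3, smul_smul]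
        field_simp
        rw [one_smul]
      have h4 : Tendsto (fun τ => (τ / Δt) • (y τ i - z))
          (nhdsWithin 0 (Set.Ioi 0)) (nhds ((0:ℝ) • (y0 i - z))) :=
        htend0.smul ((hy i).sub tendsto_const_nhds)
      rw [zero_smul] at h4
      exact h4.congr' hEq
    exact tendsto_nhds_unique h1 h2
  -- residual identities in the limit
  have hV0 : ∀ j, V0 j = Dm.mulVec (U0 j) := by
    have := resid (fun τ j => V τ j - Dm.mulVec (U τ j))
      (fun j => V0 j - Dm.mulVec (U0 j)) W W0 wn
      (fun τ hτ i => hWeq τ hτ i)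
      (fun j => (hVlim j).sub (((hcont Dm).tendsto _).comp (hUlim j)))
      hWlim
    intro j
    have := this j
    have := sub_eq_zero.mp this
    exact this
  have hW0 : ∀ j, W0 j = D.mulVec (V0 j) := by
    have := resid (fun τ j => D.mulVec (V τ j) - W τ j)
      (fun j => D.mulVec (V0 j) - W0 j) V V0 vn
      (fun τ hτ i => hVeq τ hτ i)
      (fun j => (((hcont D).tendsto _).comp (hVlim j)).sub (hWlim j))
      hVlim
    intro j
    exact (sub_eq_zero.mp (this j)).symm
  -- GSA: updates equal last stage
  have part1 : ∀ τ : ℝ, 0 < τ →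
      vn + (Δt / τ) • (∑ j, b j • (D.mulVec (V τ j) - W τ j)) = V τ L ∧
      wn + (Δt / τ) • (∑ j, b j • (V τ j - Dm.mulVec (U τ j))) = W τ L := by
    intro τ hτ
    constructor
    · have hsum : (∑ j, b j • (D.mulVec (V τ j) - W τ j))
          = ∑ j, A L j • (D.mulVec (V τ j) - W τ j) :=
        Finset.sum_congr rfl (fun j _ => by rw [(hGSA j).2])
      rw [hsum, ← hVeq τ hτ L]
    · have hsum : (∑ j, b j • (V τ j - Dm.mulVec (U τ j)))
          = ∑ j, A L j • (V τ j - Dm.mulVec (U τ j)) :=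
        Finset.sum_congr rfl (fun j _ => by rw [(hGSA j).2])
      rw [hsum, ← hWeq τ hτ L]
  refine ⟨part1, ?_, ?_, ?_⟩
  · have h := hVlim L
    rw [hV0 L] at h
    exact h.congr' (hmem.mono fun τ hτ => ((part1 τ hτ).1).symm)
  · have h := hWlim L
    rw [hW0 L, hV0 L] at h
    exact h.congr' (hmem.mono fun τ hτ => ((part1 τ hτ).2).symm)
  · have h := hUlim L
    refine h.congr' (hmem.mono fun τ hτ => ?_)
    have hU := hUeq τ hτ L
    have h1 : (∑ j, Ae L j • f (U τ j)) = ∑ j, be j • f (U τ j) :=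
      Finset.sum_congr rfl (fun j _ => by rw [(hGSA j).1])
    have h2 : (∑ j, A L j • Dp.mulVec (W τ j)) = ∑ j, b j • Dp.mulVec (W τ j) :=
      Finset.sum_congr rfl (fun j _ => by rw [(hGSA j).2])
    rw [hU, h1, h2]
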